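/- Suppose that for each integer j ≥ 11, t_j ∈ (0,1) satisfies ((j−1) − j·t_j)·log(3/(1−t_j)) + t_j = 0. Then t_j → 1 and j·(1−t_j) → 1 as j → ∞. -/

import Mathlib

/-- Suppose for each integer `j ≥ 11` that `t_j ∈ (0,1)` satisfies the critical-point
equation `((j-1) - j*t_j) * log (3/(1-t_j)) + t_j = 0`.
Then `t_j → 1` and `j * (1 - t_j) → 1` as `j → ∞`. -/
theorem stmt_5 (t : ℕ → ℝ)
    (h : ∀ j : ℕ, 11 ≤ j → t j ∈ Set.Ioo (0 : ℝ) 1 ∧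
      (((j : ℝ) - 1) - (j : ℝ) * t j) * Real.log (3 / (1 - t j)) + t j = 0) :
    Filter.Tendsto t Filter.atTop (nhds 1) ∧
    Filter.Tendsto (fun j : ℕ => (j : ℝ) * (1 - t j)) Filter.atTop (nhds 1) := by
  have key : ∀ j : ℕ, 11 ≤ j → |t j - 1| ≤ 1 / (j : ℝ) ∧
      |(j : ℝ) * (1 - t j) - 1| ≤ 1 / Real.log (3 * (j : ℝ)) := by
    intro j hj
    obtain ⟨⟨ht0, ht1⟩, heq⟩ := h j hj
    have hj11 : (11 : ℝ) ≤ (j : ℝ) := by exact_mod_cast hj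
    have hj0 : (0 : ℝ) < (j : ℝ) := by linarith
    have hu0 : 0 < 1 - t j := by linarith
    have hL : 0 < Real.log (3 / (1 - t j)) := by
      apply Real.log_pos
      rw [lt_div_iff₀ hu0]; linarith
    set L := Real.log (3 / (1 - t j)) with hLdef
    have h1 : ((j : ℝ) * (1 - t j) - 1) * L = - t j := by linear_combination heq
    have h2 : (j : ℝ) * (1 - t j) - 1 = - t j / L := by
      rw [eq_div_iff hL.ne']; linear_combination h1
    have hju : (j : ℝ) * (1 - t j) < 1 := by
      have := div_pos ht0 hL
      nlinarith [h2]
    have hlog3j : 0 < Real.log (3 * (j : ℝ)) := by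
      apply Real.log_pos; linarith
    have hLge : Real.log (3 * (j : ℝ)) ≤ L := by
      rw [hLdef]
      apply Real.log_le_log (by positivity)
      rw [le_div_iff₀ hu0]
      nlinarith
    constructor
    · rw [abs_sub_comm, abs_of_pos hu0]
      rw [le_div_iff₀ hj0]
      nlinarith
    · rw [h2, abs_div, abs_neg, abs_of_pos ht0, abs_of_pos hL]
      exact div_le_div₀ (by norm_num) ht1.le hlog3j hLge
  constructor
  · have h1 : Filter.Tendsto (fun j : ℕ => t j - 1) Filter.atTop (nhds 0) := by
      refine squeeze_zero_norm' ?_ tendsto_one_div_atTop_nhds_zero_nat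
      exact Filter.eventually_atTop.2 ⟨11, fun j hj => by
          simpa [Real.norm_eq_abs] using (key j hj).1⟩
    have := h1.add (tendsto_const_nhds (x := (1 : ℝ)))
    simpa using this
  · have hlog : Filter.Tendsto (fun j : ℕ => Real.log (3 * (j : ℝ)))
        Filter.atTop Filter.atTop := by
      apply Real.tendsto_log_atTop.comp
      exact (tendsto_natCast_atTop_atTop (R := ℝ)).const_mul_atTop (by norm_num)
    have hb : Filter.Tendsto (fun j : ℕ => 1 / Real.log (3 * (j : ℝ)))
        Filter.atTop (nhds 0) := by
      simp only [one_div]; exact hlog.inv_tendsto_atTop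
    have h1 : Filter.Tendsto (fun j : ℕ => (j : ℝ) * (1 - t j) - 1)
        Filter.atTop (nhds 0) := by
      refine squeeze_zero_norm' ?_ hb
      exact Filter.eventually_atTop.2 ⟨11, fun j hj => by
          simpa [Real.norm_eq_abs] using (key j hj).2⟩
    have := h1.add (tendsto_const_nhds (x := (1 : ℝ)))
    simpa using this
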